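/- In the plane, the function v(x,y) = x^{4/3} − y^{4/3} satisfies the ∞-Laplace equation Δ_∞ v := v_x² v_{xx} + 2 v_x v_y v_{xy} + v_y² v_{yy} = 0 at every point with x ≠ 0 and y ≠ 0. -/

import Mathlib

/-- Aronsson's function `v(x,y) = |x|^{4/3} - |y|^{4/3}`. -/
noncomputable def aronsson (x y : ℝ) : ℝ := |x| ^ ((4 : ℝ) / 3) - |y| ^ ((4 : ℝ) / 3)

noncomputable def f1 (s : ℝ) : ℝ := |s| ^ ((4 : ℝ) / 3)
noncomputable def g1 (s : ℝ) : ℝ := (4/3) * Real.sign s * |s| ^ ((1 : ℝ) / 3)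
noncomputable def g2 (s : ℝ) : ℝ := (4/9) * |s| ^ (-(2 : ℝ) / 3)

lemma hd1 (x : ℝ) (hx : x ≠ 0) : HasDerivAt f1 (g1 x) x := by
  rcases hx.lt_or_gt with h | h
  · have h1 : HasDerivAt (fun s : ℝ => (-s) ^ ((4:ℝ)/3)) ((4:ℝ)/3 * (-x) ^ ((4:ℝ)/3 - 1) * (-1)) x := by
      exact (Real.hasDerivAt_rpow_const (Or.inl (by linarith))).comp x (hasDerivAt_neg x)
    have he : f1 =ᶠ[nhds x] (fun s : ℝ => (-s) ^ ((4:ℝ)/3)) := by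
      filter_upwards [eventually_lt_nhds h] with s hs
      simp [f1, abs_of_neg hs]
    have := h1.congr_of_eventuallyEq he
    refine this.congr_deriv (Eq.symm ?_)
    rw [g1, Real.sign_of_neg h, abs_of_neg h]
    norm_num
  · have h1 : HasDerivAt (fun s : ℝ => s ^ ((4:ℝ)/3)) ((4:ℝ)/3 * x ^ ((4:ℝ)/3 - 1)) x :=
      Real.hasDerivAt_rpow_const (Or.inl hx)
    have he : f1 =ᶠ[nhds x] (fun s : ℝ => s ^ ((4:ℝ)/3)) := by
      filter_upwards [eventually_gt_nhds h] with s hs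
      simp [f1, abs_of_pos hs]
    have := h1.congr_of_eventuallyEq he
    refine this.congr_deriv (Eq.symm ?_)
    rw [g1, Real.sign_of_pos h, abs_of_pos h]
    norm_num

lemma hd2 (x : ℝ) (hx : x ≠ 0) : HasDerivAt g1 (g2 x) x := by
  rcases hx.lt_or_gt with h | h
  · have h1 : HasDerivAt (fun s : ℝ => (-(4:ℝ)/3) * (-s) ^ ((1:ℝ)/3)) ((-(4:ℝ)/3) * ((1:ℝ)/3 * (-x) ^ ((1:ℝ)/3 - 1) * (-1))) x := by
      exact ((Real.hasDerivAt_rpow_const (Or.inl (by linarith))).comp x (hasDerivAt_neg x)).const_mul _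
    have he : g1 =ᶠ[nhds x] (fun s : ℝ => (-(4:ℝ)/3) * (-s) ^ ((1:ℝ)/3)) := by
      filter_upwards [eventually_lt_nhds h] with s hs
      simp [g1, abs_of_neg hs, Real.sign_of_neg hs]
      ring
    have := h1.congr_of_eventuallyEq he
    refine this.congr_deriv (Eq.symm ?_)
    rw [g2, abs_of_neg h]
    norm_num
    ring_nf
  · have h1 : HasDerivAt (fun s : ℝ => ((4:ℝ)/3) * s ^ ((1:ℝ)/3)) (((4:ℝ)/3) * ((1:ℝ)/3 * x ^ ((1:ℝ)/3 - 1))) x :=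
      (Real.hasDerivAt_rpow_const (Or.inl hx)).const_mul _
    have he : g1 =ᶠ[nhds x] (fun s : ℝ => ((4:ℝ)/3) * s ^ ((1:ℝ)/3)) := by
      filter_upwards [eventually_gt_nhds h] with s hs
      simp [g1, abs_of_pos hs, Real.sign_of_pos hs]
    have := h1.congr_of_eventuallyEq he
    refine this.congr_deriv (Eq.symm ?_)
    rw [g2, abs_of_pos h]
    norm_num
    ring_nf

lemma dA (y s : ℝ) (hs : s ≠ 0) : deriv (fun s' => aronsson s' y) s = g1 s := by
  have := ((hd1 s hs).sub_const (|y| ^ ((4:ℝ)/3))).deriv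
  simpa [aronsson, f1] using this

lemma dB (x t : ℝ) (ht : t ≠ 0) : deriv (fun t' => aronsson x t') t = -g1 t := by
  have := ((hd1 t ht).const_sub (|x| ^ ((4:ℝ)/3))).deriv
  simpa [aronsson, f1] using this

lemma key (z : ℝ) (hz : z ≠ 0) : g1 z ^ 2 * g2 z = 64/81 := by
  have ha : (0:ℝ) < |z| := abs_pos.mpr hz
  have hs : Real.sign z ^ 2 = 1 := by
    rcases hz.lt_or_gt with h | h <;>
      simp [Real.sign_of_neg, Real.sign_of_pos, h]
  have e : (|z| ^ ((1:ℝ)/3)) ^ 2 * |z| ^ (-(2:ℝ)/3) = 1 := by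
    rw [← Real.rpow_natCast (|z| ^ ((1:ℝ)/3)) 2, ← Real.rpow_mul ha.le, ← Real.rpow_add ha]
    norm_num
  simp only [g1, g2]
  calc ((4:ℝ)/3 * Real.sign z * |z| ^ ((1:ℝ)/3)) ^ 2 * ((4:ℝ)/9 * |z| ^ (-(2:ℝ)/3))
      = (16/9 * (4/9)) * (Real.sign z ^ 2) * ((|z| ^ ((1:ℝ)/3)) ^ 2 * |z| ^ (-(2:ℝ)/3)) := by ring
    _ = 64/81 := by rw [hs, e]; norm_num

theorem statement18 (x y : ℝ) (hx : x ≠ 0) (hy : y ≠ 0) :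
    (deriv (fun s => aronsson s y) x) ^ 2
        * deriv (fun s => deriv (fun s' => aronsson s' y) s) x
      + 2 * deriv (fun s => aronsson s y) x * deriv (fun t => aronsson x t) y
        * deriv (fun t => deriv (fun s => aronsson s t) x) y
      + (deriv (fun t => aronsson x t) y) ^ 2
        * deriv (fun t => deriv (fun t' => aronsson x t') t) y = 0 := by
  have d1x : deriv (fun s => aronsson s y) x = g1 x := dA y x hx
  have d1y : deriv (fun t => aronsson x t) y = -g1 y := dB x y hy
  have d2x : deriv (fun s => deriv (fun s' => aronsson s' y) s) x = g2 x := by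
    have he : (fun s => deriv (fun s' => aronsson s' y) s) =ᶠ[nhds x] g1 := by
      filter_upwards [eventually_ne_nhds hx] with s hs using dA y s hs
    rw [he.deriv_eq, (hd2 x hx).deriv]
  have d2y : deriv (fun t => deriv (fun t' => aronsson x t') t) y = -g2 y := by
    have he : (fun t => deriv (fun t' => aronsson x t') t) =ᶠ[nhds y] (fun t => -g1 t) := by
      filter_upwards [eventually_ne_nhds hy] with t ht using dB x t ht
    rw [he.deriv_eq]; exact ((hd2 y hy).neg).deriv
  have dmix : deriv (fun t => deriv (fun s => aronsson s t) x) y = 0 := by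
    have : (fun t : ℝ => deriv (fun s => aronsson s t) x)
        = fun _ => deriv (fun s => |s| ^ ((4:ℝ)/3)) x := by
      funext t
      simp only [aronsson]
      exact deriv_sub_const _
    rw [this, deriv_const]
  rw [d1x, d1y, d2x, d2y, dmix]
  have k1 := key x hx
  have k2 := key y hy
  linear_combination k1 - k2
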